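/- Let q be a prime power, k ≤ q, A ⊆ F_q a set of size k, B ⊆ A, and M = F_q \ B with |B| = s. For a, b, c ∈ A, the sum over x ∈ M of ℓ_a(x)·ℓ_b(x)·ℓ_c(x), where ℓ_i are the Lagrange interpolation polynomials for A, equals -1 if a = b = c ∈ B, and 0 otherwise, provided 3(k-1) < q - 1. -/

import Mathlib

open Finset Polynomial

lemma sum_eval_zero_aux {F : Type*} [Field F] [Fintype F] (p : F[X])
    (h : p.natDegree < Fintype.card F - 1) :
    ∑ x : F, p.eval x = 0 := by
  have : ∀ x : F, p.eval x = ∑ i ∈ Finset.range (p.natDegree + 1), p.coeff i * x ^ i := by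
    intro x
    rw [Polynomial.eval_eq_sum_range]
  simp_rw [this]
  rw [Finset.sum_comm]
  refine Finset.sum_eq_zero fun i hi => ?_
  rw [← Finset.mul_sum, FiniteField.sum_pow_lt_card_sub_one, mul_zero]
  have := Finset.mem_range.mp hi
  omega

/-- Let `A ⊆ F_q` be the node set (of size `k`), `B ⊆ A`, and `M = F_q \ B`. For nodes
`a, b, c ∈ A`, the sum over `x ∈ M` of the product of the three Lagrange interpolation
polynomials `ℓ_a(x)·ℓ_b(x)·ℓ_c(x)` equals `-1` if `a = b = c ∈ B` and `0` otherwise,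
provided `3(k-1) < q - 1`. -/
theorem stmt5 {F : Type*} [Field F] [Fintype F] [DecidableEq F]
    (A B : Finset F) (hBA : B ⊆ A)
    (hdeg : 3 * (A.card - 1) < Fintype.card F - 1)
    (a b c : F) (ha : a ∈ A) (hb : b ∈ A) (hc : c ∈ A) :
    ∑ x ∈ Finset.univ \ B,
        (Lagrange.basis A id a).eval x * (Lagrange.basis A id b).eval x *
          (Lagrange.basis A id c).eval x =
      if a = b ∧ b = c ∧ a ∈ B then -1 else 0 := by
  have hinj : Set.InjOn (id : F → F) A := Function.injective_id.injOn
  set p := Lagrange.basis A id a * Lagrange.basis A id b * Lagrange.basis A id c with hp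
  have hpd : p.natDegree < Fintype.card F - 1 := by
    calc p.natDegree ≤ (Lagrange.basis A id a).natDegree + (Lagrange.basis A id b).natDegree
        + (Lagrange.basis A id c).natDegree := by
          refine le_trans (Polynomial.natDegree_mul_le) ?_
          exact Nat.add_le_add_right Polynomial.natDegree_mul_le _
      _ = 3 * (A.card - 1) := by
          rw [Lagrange.natDegree_basis hinj ha, Lagrange.natDegree_basis hinj hb,
            Lagrange.natDegree_basis hinj hc]; ring
      _ < _ := hdeg
  have hsum : ∀ x : F, (Lagrange.basis A id a).eval x * (Lagrange.basis A id b).eval x *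
      (Lagrange.basis A id c).eval x = p.eval x := by
    intro x; simp [hp]
  simp_rw [hsum]
  have htotal : ∑ x : F, p.eval x = 0 := sum_eval_zero_aux p hpd
  have hsplit : ∑ x ∈ Finset.univ \ B, p.eval x = (∑ x : F, p.eval x) - ∑ x ∈ B, p.eval x := by
    rw [eq_sub_iff_add_eq, Finset.sum_sdiff (Finset.subset_univ B)]
  rw [hsplit, htotal, zero_sub]
  have hB : ∑ x ∈ B, p.eval x = if a = b ∧ b = c ∧ a ∈ B then 1 else 0 := by
    have hx : ∀ x ∈ B, p.eval x = if a = b ∧ b = c ∧ a = x then 1 else 0 := by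
      intro x hxB
      have hxA := hBA hxB
      simp only [hp, Polynomial.eval_mul]
      by_cases hax : a = x
      · by_cases hbx : b = x
        · by_cases hcx : c = x
          · subst hax; subst hbx; subst hcx
            have h1 := Lagrange.eval_basis_self hinj hxA
            simp only [id_eq] at h1
            rw [h1]; norm_num
          · rw [show (x : F) = id x from rfl, Lagrange.eval_basis_of_ne hcx hxA]
            simp only [mul_zero]
            rw [if_neg]; rintro ⟨h1, h2, h3⟩; exact hcx (h2 ▸ hbx)
        · rw [show (x : F) = id x from rfl, Lagrange.eval_basis_of_ne hbx hxA]
          simp only [mul_zero, zero_mul]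
          rw [if_neg]; rintro ⟨h1, h2, h3⟩; exact hbx (h1 ▸ h3)
      · rw [show (x : F) = id x from rfl, Lagrange.eval_basis_of_ne hax hxA]
        simp only [zero_mul]
        rw [if_neg]; rintro ⟨h1, h2, h3⟩; exact hax h3
    rw [Finset.sum_congr rfl hx]
    by_cases h : a = b ∧ b = c ∧ a ∈ B
    · obtain ⟨h1, h2, h3⟩ := h
      rw [if_pos ⟨h1, h2, h3⟩]
      simp only [h1, h2, true_and]
      rw [Finset.sum_ite_eq B c (fun _ => (1 : F)), if_pos (h2 ▸ h1 ▸ h3)]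
    · rw [if_neg h]
      refine Finset.sum_eq_zero fun x hxB => ?_
      rw [if_neg]; rintro ⟨h1, h2, h3⟩; exact h ⟨h1, h2, h3 ▸ hxB⟩
  rw [hB]
  split <;> simp
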